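/- Let X, Z ∈ M_3(ℂ) be given by X·e_j = e_{j+1 mod 3} and Z·e_j = ω^j·e_j with ω = e^{2πi/3}, and for t ∈ ℝ let ψ_t = (0, 1, −e^{2it})/√2 ∈ ℂ³. Then ψ_t is a unit vector, and for every (m, n) ∈ (ℤ/3ℤ)² with (m, n) ≠ (0, 0), |⟨ψ_t, X^m Z^n ψ_t⟩|² = 1/4. Consequently, the nine projections Π_{(m,n)} onto the vectors X^m Z^n ψ_t form a SIC in dimension 3: Tr(Π_a Π_b) = (3·δ_ab + 1)/4 for all a, b ∈ (ℤ/3ℤ)². -/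

import Mathlib

open Matrix

/-- ω = e^{2πi/3}. -/
noncomputable def ω : ℂ := Complex.exp (2 * Real.pi * Complex.I / 3)

/-- The shift matrix X on ℂ³: X·e_j = e_{j+1 mod 3}. -/
def Xmat : Matrix (Fin 3) (Fin 3) ℂ :=
  Matrix.of fun i j => if i = j + 1 then 1 else 0

/-- The phase matrix Z on ℂ³: Z·e_j = ω^j·e_j. -/
noncomputable def Zmat : Matrix (Fin 3) (Fin 3) ℂ :=
  Matrix.diagonal fun j => ω ^ (j : ℕ)

/-- The fiducial vector ψ_t = (0, 1, −e^{2it})/√2. -/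
noncomputable def ψ (t : ℝ) : Fin 3 → ℂ :=
  fun i => (Real.sqrt 2 : ℂ)⁻¹ * ![0, 1, -Complex.exp (2 * t * Complex.I)] i

/-- The Weyl-Heisenberg orbit vectors X^m Z^n ψ_t. -/
noncomputable def sicVec (t : ℝ) (a : ZMod 3 × ZMod 3) : Fin 3 → ℂ :=
  (Xmat ^ a.1.val * Zmat ^ a.2.val).mulVec (ψ t)

/-- The projections onto the Weyl-Heisenberg orbit vectors. -/
noncomputable def sicProj (t : ℝ) (a : ZMod 3 × ZMod 3) : Matrix (Fin 3) (Fin 3) ℂ :=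
  Matrix.vecMulVec (sicVec t a) (star (sicVec t a))

/-! ### Auxiliary lemmas -/

lemma ω_prim : IsPrimitiveRoot ω 3 := by
  have h := Complex.isPrimitiveRoot_exp 3 (by norm_num)
  convert h using 2
  simp [ω]

lemma ω3 : ω ^ 3 = 1 := ω_prim.pow_eq_one

lemma ω_sum : ω ^ 2 + ω + 1 = 0 := by
  have h1 : ω ≠ 1 := ω_prim.ne_one (by norm_num)
  have h : (ω - 1) * (ω ^ 2 + ω + 1) = 0 := by linear_combination ω3
  rcases mul_eq_zero.mp h with h' | h'
  · exact absurd (sub_eq_zero.mp h') h1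
  · exact h'

lemma ω_mul_sq : ω * ω ^ 2 = 1 := by rw [← pow_succ']; exact ω3

lemma conj_ω : (starRingEnd ℂ) ω = ω ^ 2 := by
  have h1 : (starRingEnd ℂ) ω = ω⁻¹ := by
    rw [ω, ← Complex.exp_conj, ← Complex.exp_neg]
    congr 1
    simp [Complex.conj_I, map_div₀, map_ofNat]
    ring
  rw [h1, inv_eq_of_mul_eq_one_left]
  linear_combination ω_mul_sq

lemma normSq_ω : Complex.normSq ω = 1 := by
  have h : ω * (starRingEnd ℂ) ω = 1 := by rw [conj_ω]; exact ω_mul_sq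
  rw [Complex.mul_conj] at h
  exact_mod_cast h

lemma sqrt2_sq : (Real.sqrt 2 : ℂ) * (Real.sqrt 2 : ℂ) = 2 := by
  rw [← Complex.ofReal_mul, Real.mul_self_sqrt (by norm_num)]
  norm_num

lemma inv_sqrt2_sq : ((Real.sqrt 2 : ℝ) : ℂ)⁻¹ * ((Real.sqrt 2 : ℝ) : ℂ)⁻¹ = 1/2 := by
  rw [← mul_inv, sqrt2_sq]; norm_num

lemma u_mul_conj (t : ℝ) :
    Complex.exp (2 * t * Complex.I) * (starRingEnd ℂ) (Complex.exp (2 * t * Complex.I)) = 1 := by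
  rw [← Complex.exp_conj, ← Complex.exp_add]
  rw [show (starRingEnd ℂ) (2 * (t : ℂ) * Complex.I) = -(2 * t * Complex.I) by
    simp [Complex.conj_I, map_ofNat]]
  simp

lemma normSq_u (t : ℝ) : Complex.normSq (Complex.exp (2 * t * Complex.I)) = 1 := by
  have h := u_mul_conj t
  rw [Complex.mul_conj] at h
  exact_mod_cast h

lemma X3 : Xmat ^ 3 = 1 := by
  rw [pow_succ, pow_two]
  ext i j
  fin_cases i <;> fin_cases j <;>
    simp [Xmat, Matrix.mul_apply, Fin.sum_univ_three, Matrix.one_apply]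

lemma Z3 : Zmat ^ 3 = 1 := by
  have h1 : Zmat ^ 3 = Matrix.diagonal fun j : Fin 3 => (ω ^ (j : ℕ)) ^ 3 := by
    rw [Zmat, Matrix.diagonal_pow]; rfl
  have h : (fun j : Fin 3 => (ω ^ (j : ℕ)) ^ 3) = fun _ => 1 := by
    funext j; rw [← pow_mul, mul_comm, pow_mul, ω3, one_pow]
  rw [h1, h]; exact Matrix.diagonal_one

lemma XH : Xmatᴴ = Xmat ^ 2 := by
  rw [pow_two]
  ext i j
  fin_cases i <;> fin_cases j <;>
    simp [Xmat, Matrix.mul_apply, Fin.sum_univ_three, Matrix.conjTranspose_apply]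

lemma ZH : Zmatᴴ = Zmat ^ 2 := by
  rw [pow_two, Zmat, Matrix.diagonal_conjTranspose, Matrix.diagonal_mul_diagonal]
  have h : (star fun j : Fin 3 => ω ^ (j : ℕ)) = fun i : Fin 3 => ω ^ (i : ℕ) * ω ^ (i : ℕ) := by
    funext j
    show star (ω ^ (j : ℕ)) = _
    rw [star_pow]
    show ((starRingEnd ℂ) ω) ^ (j : ℕ) = _
    rw [conj_ω, ← pow_mul, two_mul, pow_add]
  rw [h]

lemma ZX : Zmat * Xmat = ω • (Xmat * Zmat) := by
  ext i j
  fin_cases i <;> fin_cases j <;>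
    simp [Zmat, Xmat, Matrix.mul_apply, Fin.sum_univ_three, Matrix.diagonal] <;>
    first
      | linear_combination -ω3
      | linear_combination -2*ω3
      | linear_combination ω3
      | linear_combination 2*ω3
      | ring

lemma ZXpow (i : ℕ) : Zmat * Xmat ^ i = ω ^ i • (Xmat ^ i * Zmat) := by
  induction i with
  | zero => simp
  | succ n ih =>
    rw [pow_succ, ← mul_assoc, ih, smul_mul_assoc, mul_assoc, ZX, mul_smul_comm,
      pow_succ, smul_smul]
    ring_nf
    rw [mul_assoc]

lemma ZpowXpow (j i : ℕ) : Zmat ^ j * Xmat ^ i = ω ^ (i * j) • (Xmat ^ i * Zmat ^ j) := by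
  induction j with
  | zero => simp
  | succ n ih =>
    rw [pow_succ, mul_assoc, ZXpow, mul_smul_comm, ← mul_assoc, ih, smul_mul_assoc,
      smul_smul, ← pow_add, mul_assoc, ← pow_succ]
    congr 2
    ring

lemma pow_mod3 {M : Matrix (Fin 3) (Fin 3) ℂ} (h : M ^ 3 = 1) (e : ℕ) :
    M ^ e = M ^ (e % 3) := by
  conv_lhs => rw [← Nat.mod_add_div e 3]
  rw [pow_add, pow_mul, h, one_pow, mul_one]

lemma ωpow_mod3 (e : ℕ) : ω ^ e = ω ^ (e % 3) := by
  conv_lhs => rw [← Nat.mod_add_div e 3]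
  rw [pow_add, pow_mul, ω3, one_pow, mul_one]

/-- The basic overlap function. -/
noncomputable def Fov (t : ℝ) (m n : ℕ) : ℂ :=
  star (ψ t) ⬝ᵥ (Xmat ^ m * Zmat ^ n).mulVec (ψ t)

lemma psi_norm (t : ℝ) : star (ψ t) ⬝ᵥ ψ t = 1 := by
  simp [ψ, dotProduct, Fin.sum_univ_three, map_inv₀, Complex.conj_ofReal]
  linear_combination (1 + (starRingEnd ℂ) (Complex.exp (2*t*Complex.I)) *
    Complex.exp (2*t*Complex.I)) * inv_sqrt2_sq + 1/2 * u_mul_conj t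

lemma Fov00 (t : ℝ) : Fov t 0 0 = 1 := by
  rw [Fov, pow_zero, pow_zero, one_mul, Matrix.one_mulVec]
  exact psi_norm t

lemma normSq_half : Complex.normSq (-1/2 : ℂ) = 1/4 := by
  rw [show (-1/2 : ℂ) = ((-1/2 : ℝ) : ℂ) by norm_num, Complex.normSq_ofReal]
  norm_num

lemma Fov_normSq (t : ℝ) {m n : ℕ} (hm : m < 3) (hn : n < 3) (h : ¬(m = 0 ∧ n = 0)) :
    Complex.normSq (Fov t m n) = 1/4 := by
  set u := Complex.exp (2 * (t : ℂ) * Complex.I) with hu_def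
  have hs := inv_sqrt2_sq
  have hu := u_mul_conj t
  interval_cases m <;> interval_cases n
  · exact absurd ⟨rfl, rfl⟩ h
  · have hval : Fov t 0 1 = (-1/2 : ℂ) := by
      simp [Fov, ψ, Xmat, Zmat, Matrix.mulVec, dotProduct, Matrix.mul_apply,
        Fin.sum_univ_three, Matrix.diagonal, pow_succ, map_inv₀, Complex.conj_ofReal]
      linear_combination (ω + ω^2 * (starRingEnd ℂ) u * u) * hs + ω^2/2 * hu + 1/2 * ω_sum
    rw [hval, normSq_half]
  · have hval : Fov t 0 2 = (-1/2 : ℂ) := by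
      simp [Fov, ψ, Xmat, Zmat, Matrix.mulVec, dotProduct, Matrix.mul_apply,
        Fin.sum_univ_three, Matrix.diagonal, pow_succ, map_inv₀, Complex.conj_ofReal]
      linear_combination (ω^2 + ω^4 * (starRingEnd ℂ) u * u) * hs + ω^4/2 * hu
        + 1/2 * ω_sum + ω/2 * ω3
    rw [hval, normSq_half]
  · have hval : Fov t 1 0 = (-1/2 : ℂ) * (starRingEnd ℂ) u := by
      simp [Fov, ψ, Xmat, Zmat, Matrix.mulVec, dotProduct, Matrix.mul_apply,
        Fin.sum_univ_three, Matrix.diagonal, pow_succ, map_inv₀, Complex.conj_ofReal]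
      linear_combination (-(starRingEnd ℂ) u) * hs
    rw [hval, Complex.normSq_mul, Complex.normSq_conj, normSq_u, normSq_half]
    norm_num
  · have hval : Fov t 1 1 = (-1/2 : ℂ) * (starRingEnd ℂ) u * ω := by
      simp [Fov, ψ, Xmat, Zmat, Matrix.mulVec, dotProduct, Matrix.mul_apply,
        Fin.sum_univ_three, Matrix.diagonal, pow_succ, map_inv₀, Complex.conj_ofReal]
      linear_combination (-(starRingEnd ℂ) u * ω) * hs
    rw [hval, Complex.normSq_mul, Complex.normSq_mul, Complex.normSq_conj, normSq_u,
      normSq_ω, normSq_half]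
    norm_num
  · have hval : Fov t 1 2 = (-1/2 : ℂ) * (starRingEnd ℂ) u * ω^2 := by
      simp [Fov, ψ, Xmat, Zmat, Matrix.mulVec, dotProduct, Matrix.mul_apply,
        Fin.sum_univ_three, Matrix.diagonal, pow_succ, map_inv₀, Complex.conj_ofReal]
      linear_combination (-(starRingEnd ℂ) u * ω^2) * hs
    rw [hval, Complex.normSq_mul, Complex.normSq_mul, Complex.normSq_conj, normSq_u,
      map_pow Complex.normSq, normSq_ω, normSq_half]
    norm_num
  · have hval : Fov t 2 0 = (-1/2 : ℂ) * u := by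
      simp [Fov, ψ, Xmat, Zmat, Matrix.mulVec, dotProduct, Matrix.mul_apply,
        Fin.sum_univ_three, Matrix.diagonal, pow_succ, map_inv₀, Complex.conj_ofReal]
      linear_combination (-u) * hs
    rw [hval, Complex.normSq_mul, normSq_u, normSq_half]
    norm_num
  · have hval : Fov t 2 1 = (-1/2 : ℂ) * u * ω^2 := by
      simp [Fov, ψ, Xmat, Zmat, Matrix.mulVec, dotProduct, Matrix.mul_apply,
        Fin.sum_univ_three, Matrix.diagonal, pow_succ, map_inv₀, Complex.conj_ofReal]
      linear_combination (-u * ω^2) * hs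
    rw [hval, Complex.normSq_mul, Complex.normSq_mul, normSq_u, map_pow Complex.normSq,
      normSq_ω, normSq_half]
    norm_num
  · have hval : Fov t 2 2 = (-1/2 : ℂ) * u * ω^4 := by
      simp [Fov, ψ, Xmat, Zmat, Matrix.mulVec, dotProduct, Matrix.mul_apply,
        Fin.sum_univ_three, Matrix.diagonal, pow_succ, map_inv₀, Complex.conj_ofReal]
      linear_combination (-u * ω^4) * hs
    rw [hval, Complex.normSq_mul, Complex.normSq_mul, normSq_u, map_pow Complex.normSq,
      normSq_ω, normSq_half]
    norm_num
lemma overlap_eq (t : ℝ) (p q r s : ℕ) :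
    star ((Xmat ^ p * Zmat ^ q).mulVec (ψ t)) ⬝ᵥ (Xmat ^ r * Zmat ^ s).mulVec (ψ t)
      = ω ^ (((2*p+r) * (2*q)) % 3) * Fov t ((2*p+r) % 3) ((2*q+s) % 3) := by
  have hM : (Xmat ^ p * Zmat ^ q)ᴴ * (Xmat ^ r * Zmat ^ s)
      = ω ^ (((2*p+r) * (2*q)) % 3) • (Xmat ^ ((2*p+r) % 3) * Zmat ^ ((2*q+s) % 3)) := by
    rw [Matrix.conjTranspose_mul, Matrix.conjTranspose_pow, Matrix.conjTranspose_pow, XH, ZH,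
      ← pow_mul, ← pow_mul]
    have h1 : Zmat ^ (2*q) * Xmat ^ (2*p) * (Xmat ^ r * Zmat ^ s)
        = Zmat ^ (2*q) * Xmat ^ (2*p+r) * Zmat ^ s := by
      rw [pow_add]; noncomm_ring
    rw [h1, ZpowXpow, smul_mul_assoc, mul_assoc, ← pow_add,
      ← ωpow_mod3, ← pow_mod3 X3, ← pow_mod3 Z3]
  rw [Matrix.star_mulVec, ← Matrix.dotProduct_mulVec, Matrix.mulVec_mulVec, hM,
    Matrix.smul_mulVec, dotProduct_smul, smul_eq_mul, Fov]

lemma sicVec_diag (t : ℝ) (a : ZMod 3 × ZMod 3) :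
    star (sicVec t a) ⬝ᵥ sicVec t a = 1 := by
  rw [sicVec, overlap_eq]
  have e1 : (2*a.1.val + a.1.val) = 3 * a.1.val := by ring
  have e2 : (2*a.2.val + a.2.val) = 3 * a.2.val := by ring
  have e3 : (2*a.1.val + a.1.val) * (2*a.2.val) = 3 * (a.1.val * (2*a.2.val)) := by ring
  rw [e3, e1, e2, Nat.mul_mod_right, Nat.mul_mod_right, Nat.mul_mod_right, pow_zero,
    one_mul, Fov00]

lemma ne_aux : ∀ a b : ZMod 3 × ZMod 3, a ≠ b →
    ¬((2*a.1.val + b.1.val) % 3 = 0 ∧ (2*a.2.val + b.2.val) % 3 = 0) := by decide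

lemma sicVec_normSq (t : ℝ) (a b : ZMod 3 × ZMod 3) (h : a ≠ b) :
    Complex.normSq (star (sicVec t a) ⬝ᵥ sicVec t b) = 1/4 := by
  rw [sicVec, sicVec, overlap_eq, Complex.normSq_mul, map_pow Complex.normSq, normSq_ω,
    one_pow, one_mul]
  exact Fov_normSq t (Nat.mod_lt _ (by norm_num)) (Nat.mod_lt _ (by norm_num))
    (ne_aux a b h)

lemma conj_dot (x y : Fin 3 → ℂ) :
    star y ⬝ᵥ x = (starRingEnd ℂ) (star x ⬝ᵥ y) := by
  simp [dotProduct, Fin.sum_univ_three]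
  ring

lemma key1 (x y : Fin 3 → ℂ) :
    Matrix.vecMulVec x (star x) * Matrix.vecMulVec y (star y)
      = (star x ⬝ᵥ y) • Matrix.vecMulVec x (star y) := by
  ext i j
  simp [Matrix.mul_apply, Matrix.vecMulVec_apply, dotProduct, Fin.sum_univ_three]
  ring

lemma key2 (x y : Fin 3 → ℂ) :
    (Matrix.vecMulVec x (star y)).trace = star y ⬝ᵥ x := by
  simp [Matrix.trace, Matrix.diag, Matrix.vecMulVec_apply, dotProduct, Fin.sum_univ_three]
  ring

lemma proj_mulVec (x w : Fin 3 → ℂ) :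
    (Matrix.vecMulVec x (star x)).mulVec w = (star x ⬝ᵥ w) • x := by
  ext i
  simp [Matrix.mulVec, Matrix.vecMulVec_apply, dotProduct, Fin.sum_univ_three]
  ring

lemma sicVec_zero (t : ℝ) : sicVec t (0, 0) = ψ t := by
  rw [sicVec]
  simp

theorem weyl_heisenberg_qutrit_sic (t : ℝ) :
    (star (ψ t) ⬝ᵥ ψ t = 1) ∧
    (∀ m n : ZMod 3, (m, n) ≠ (0, 0) →
      Complex.normSq (star (ψ t) ⬝ᵥ sicVec t (m, n)) = 1 / 4) ∧
    (∀ a, (sicProj t a).IsHermitian) ∧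
    (∀ a, sicProj t a * sicProj t a = sicProj t a) ∧
    (∀ a, (sicProj t a).rank = 1) ∧
    (∀ a b : ZMod 3 × ZMod 3, (sicProj t a * sicProj t b).trace =
      (3 * (if a = b then 1 else 0) + 1) / 4) := by
  refine ⟨psi_norm t, ?_, ?_, ?_, ?_, ?_⟩
  · intro m n h
    rw [← sicVec_zero t]
    exact sicVec_normSq t (0,0) (m,n) (Ne.symm h)
  · intro a
    show (sicProj t a)ᴴ = sicProj t a
    ext i j
    simp [sicProj, Matrix.conjTranspose_apply, Matrix.vecMulVec_apply, mul_comm]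
  · intro a
    rw [sicProj, key1, sicVec_diag, one_smul]
  · intro a
    have hne : sicVec t a ≠ 0 := by
      intro h0
      have := sicVec_diag t a
      rw [h0] at this
      simp [dotProduct] at this
    apply le_antisymm
    · calc (sicProj t a).rank
          ≤ (Matrix.replicateCol (Fin 1) (sicVec t a)).rank := by
            rw [sicProj, Matrix.vecMulVec_eq (Fin 1)]
            exact Matrix.rank_mul_le_left _ _
        _ ≤ 1 := by
            have h := Matrix.rank_le_card_width (Matrix.replicateCol (Fin 1) (sicVec t a))
            simpa using h
    · rw [Nat.one_le_iff_ne_zero]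
      intro h0
      have hx : sicVec t a ∈ LinearMap.range (sicProj t a).mulVecLin := by
        refine ⟨sicVec t a, ?_⟩
        rw [Matrix.mulVecLin_apply, sicProj, proj_mulVec, sicVec_diag, one_smul]
      have : (⟨sicVec t a, hx⟩ : LinearMap.range (sicProj t a).mulVecLin) ≠ 0 := by
        intro hc
        exact hne (by simpa using congrArg Subtype.val hc)
      have hpos : 0 < Module.finrank ℂ (LinearMap.range (sicProj t a).mulVecLin) :=
        Module.finrank_pos_iff_exists_ne_zero.mpr ⟨_, this⟩
      rw [Matrix.rank] at h0
      omega
  · intro a b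
    rw [sicProj, sicProj, key1, Matrix.trace_smul, key2, conj_dot, smul_eq_mul,
      mul_comm, Complex.mul_conj]
    by_cases hab : a = b
    · subst hab
      rw [sicVec_diag]
      norm_num
    · rw [sicVec_normSq t b a (fun h => hab h.symm), if_neg hab]
      norm_num
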